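/- (Second group-factorization method.) Let K be a normal subgroup of G and S_L a finite subset of G such that the multiplication map S_L × K → G, (s, k) ↦ s·k, is a bijection. Let O be an n×n complex matrix invariant under conjugation by K: π(k) O π(k)* = O for every k ∈ K. Then the symmetrization over the coset representatives equals the symmetrization over the whole group: (1/|S_L|) ∑_{s ∈ S_L} π(s) O π(s)* = Π_G(O). -/

import Mathlib

/-- The symmetrization map `Π_G` associated with a unitary representation
`π : G →* U(n)`: `Π_G(S) = (1/|G|) ∑ g, π(g) S π(g)*`. -/
noncomputable def symG {G : Type*} [Group G] [Fintype G] {n : ℕ}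
    (π : G →* Matrix.unitaryGroup (Fin n) ℂ)
    (S : Matrix (Fin n) (Fin n) ℂ) : Matrix (Fin n) (Fin n) ℂ :=
  (Fintype.card G : ℂ)⁻¹ • ∑ g : G,
    (π g : Matrix (Fin n) (Fin n) ℂ) * S * star (π g : Matrix (Fin n) (Fin n) ℂ)

/-- Second group-factorization method: if `K ⊴ G`, `G = S_L·K` (unique factorization)
and `O` is invariant under conjugation by `K`, then symmetrizing over the coset
representatives `S_L` equals symmetrizing over the whole group `G`. -/
theorem coset_symmetrization_of_normal_invariance {G : Type*} [Group G] [Fintype G]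
    {n : ℕ} (hn : 0 < n) (π : G →* Matrix.unitaryGroup (Fin n) ℂ)
    (K : Subgroup G) [K.Normal] (SL : Finset G)
    (hfact : Function.Bijective (fun p : SL × K => (p.1 : G) * (p.2 : G)))
    (O : Matrix (Fin n) (Fin n) ℂ)
    (hinv : ∀ k ∈ K,
      (π k : Matrix (Fin n) (Fin n) ℂ) * O * star (π k : Matrix (Fin n) (Fin n) ℂ) = O) :
    (SL.card : ℂ)⁻¹ • ∑ s ∈ SL,
        (π s : Matrix (Fin n) (Fin n) ℂ) * O * star (π s : Matrix (Fin n) (Fin n) ℂ)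
      = symG π O := by
  letI : Fintype ↥K := Fintype.ofFinite _
  set F : G → Matrix (Fin n) (Fin n) ℂ := fun g =>
    (π g : Matrix (Fin n) (Fin n) ℂ) * O * star (π g : Matrix (Fin n) (Fin n) ℂ) with hF
  have hcard : Fintype.card G = SL.card * Fintype.card K := by
    rw [← Fintype.card_coe SL, ← Fintype.card_prod]
    exact (Fintype.card_of_bijective hfact).symm
  have hterm : ∀ (s : SL) (k : K), F ((s : G) * (k : G)) = F (s : G) := by
    rintro s k
    simp only [hF, map_mul]
    push_cast
    rw [star_mul]
    have : (π (s : G) : Matrix (Fin n) (Fin n) ℂ) * (π (k : G) : Matrix (Fin n) (Fin n) ℂ)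
        * O * ((star (π (k : G) : Matrix (Fin n) (Fin n) ℂ)) *
          (star (π (s : G) : Matrix (Fin n) (Fin n) ℂ)))
        = (π (s : G) : Matrix (Fin n) (Fin n) ℂ)
          * ((π (k : G) : Matrix (Fin n) (Fin n) ℂ) * O *
            (star (π (k : G) : Matrix (Fin n) (Fin n) ℂ)))
          * (star (π (s : G) : Matrix (Fin n) (Fin n) ℂ)) := by
      noncomm_ring
    rw [this, hinv (k : G) k.2]
  have hsum : ∑ g : G, F g = (Fintype.card K : ℕ) • ∑ s ∈ SL, F s := by
    rw [← Fintype.sum_bijective _ hfact (fun p => F ((p.1 : G) * (p.2 : G))) F (fun _ => rfl)]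
    rw [Fintype.sum_prod_type]
    simp only [hterm]
    rw [← Finset.sum_coe_sort SL F]
    rw [Finset.smul_sum]
    exact Finset.sum_congr rfl fun s _ => by simp [Finset.card_univ]
  rw [symG, hsum, hcard]
  rw [← Nat.cast_smul_eq_nsmul ℂ, smul_smul]
  congr 1
  have hK : (Fintype.card K : ℂ) ≠ 0 := Nat.cast_ne_zero.2 Fintype.card_ne_zero
  push_cast
  field_simp
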